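/- In the abstract finite volume setting (finite cell set 𝓣 with measures |K| > 0, faces ℰ with measures |e| > 0 and distances d_e > 0, each interior face joining two distinct cells and each boundary face one cell), define the discrete Lagrangian 𝓛_h(u) = (1/2) Σ_{e∈ℰ} F_e(u)² |e| d_e − Σ_K f_K u_K |K|, where F_e(u) = (u_{K₂}−u_{K₁})/d_e for interior faces e = K₁|K₂ and F_e(u) = −u_K/d_e for boundary faces, and (f_K) is given. Then u is a critical point of 𝓛_h if and only if −(Δ_h u)_K = f_K for every cell K, where (Δ_h u)_K = (1/|K|) Σ_{e⊂∂K} F_{e,K}(u)|e| with the signed fluxes of the two-point scheme. Moreover this critical point is unique provided every cell can be connected to a boundary face through faces of the mesh (which guarantees strict convexity of the quadratic part). -/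

import Mathlib

open Finset

/-- Two-point flux finite volume discrete Laplacian on an abstract mesh. -/
noncomputable def lapFV {𝒯 ℰi ℰb : Type*} [Fintype ℰi] [Fintype ℰb] [DecidableEq 𝒯]
    (mK : 𝒯 → ℝ) (c1 c2 : ℰi → 𝒯) (cb : ℰb → 𝒯)
    (meI dI : ℰi → ℝ) (meB dB : ℰb → ℝ) (u : 𝒯 → ℝ) (K : 𝒯) : ℝ :=
  (1 / mK K) *
    ((∑ e : ℰi, ((if c1 e = K then (u (c2 e) - u (c1 e)) / dI e * meI e else 0)
        + (if c2 e = K then (u (c1 e) - u (c2 e)) / dI e * meI e else 0)))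
      + ∑ e : ℰb, (if cb e = K then (-(u K) / dB e) * meB e else 0))

/-- Adjacency of cells through an interior face. -/
def adjFV {𝒯 ℰi : Type*} (c1 c2 : ℰi → 𝒯) (K K' : 𝒯) : Prop :=
  ∃ e : ℰi, (c1 e = K ∧ c2 e = K') ∨ (c1 e = K' ∧ c2 e = K)

set_option linter.unusedSectionVars false


section Aux
variable {𝒯 ℰi ℰb : Type*} [Fintype 𝒯] [Fintype ℰi] [Fintype ℰb] [DecidableEq 𝒯]
variable (c1 c2 : ℰi → 𝒯) (cb : ℰb → 𝒯) (meI dI : ℰi → ℝ) (meB dB : ℰb → ℝ)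

noncomputable def Sfv (u : 𝒯 → ℝ) (K : 𝒯) : ℝ :=
  (∑ e : ℰi, ((if c1 e = K then (u (c2 e) - u (c1 e)) / dI e * meI e else 0)
      + (if c2 e = K then (u (c1 e) - u (c2 e)) / dI e * meI e else 0)))
    + ∑ e : ℰb, (if cb e = K then (-(u K) / dB e) * meB e else 0)

noncomputable def Afv (u v : 𝒯 → ℝ) : ℝ :=
  (∑ e : ℰi, (u (c2 e) - u (c1 e)) * (v (c2 e) - v (c1 e)) / dI e * meI e)
    + ∑ e : ℰb, u (cb e) * v (cb e) / dB e * meB e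

lemma Afv_eq_sum (u v : 𝒯 → ℝ) :
    Afv c1 c2 cb meI dI meB dB u v
      = ∑ K : 𝒯, (-(Sfv c1 c2 cb meI dI meB dB u K)) * v K := by
  unfold Afv Sfv
  symm
  simp only [neg_add, add_mul, neg_mul, Finset.sum_mul, ite_mul, zero_mul]
  rw [Finset.sum_add_distrib]
  congr 1
  · simp only [← Finset.sum_neg_distrib]
    rw [Finset.sum_comm]
    refine Finset.sum_congr rfl fun e _ => ?_
    rw [Finset.sum_neg_distrib]
    simp only [Finset.sum_add_distrib, Finset.sum_ite_eq, Finset.mem_univ, if_true]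
    ring
  · simp only [← Finset.sum_neg_distrib]
    rw [Finset.sum_comm]
    refine Finset.sum_congr rfl fun e _ => ?_
    rw [Finset.sum_neg_distrib]
    simp only [Finset.sum_ite_eq, Finset.mem_univ, if_true]
    ring

lemma sumI_expand (hdI : ∀ e, dI e ≠ 0) (u v : 𝒯 → ℝ) (t : ℝ) :
    ∑ e : ℰi, ((u (c2 e) + t * v (c2 e) - (u (c1 e) + t * v (c1 e))) / dI e) ^ 2 * meI e * dI e
      = (∑ e : ℰi, ((u (c2 e) - u (c1 e)) / dI e) ^ 2 * meI e * dI e)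
        + t * (∑ e : ℰi, (u (c2 e) - u (c1 e)) * (v (c2 e) - v (c1 e)) / dI e * meI e) * 2
        + t ^ 2 * ((1 / 2) * ∑ e : ℰi, (v (c2 e) - v (c1 e)) * (v (c2 e) - v (c1 e)) / dI e * meI e) * 2
        := by
  simp only [Finset.mul_sum, Finset.sum_mul]
  rw [← Finset.sum_add_distrib, ← Finset.sum_add_distrib]
  refine Finset.sum_congr rfl fun e _ => ?_
  have hd := hdI e
  field_simp
  ring

lemma sumB_expand (hdB : ∀ e, dB e ≠ 0) (u v : 𝒯 → ℝ) (t : ℝ) :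
    ∑ e : ℰb, (-(u (cb e) + t * v (cb e)) / dB e) ^ 2 * meB e * dB e
      = (∑ e : ℰb, (-(u (cb e)) / dB e) ^ 2 * meB e * dB e)
        + t * (∑ e : ℰb, u (cb e) * v (cb e) / dB e * meB e) * 2
        + t ^ 2 * ((1 / 2) * ∑ e : ℰb, v (cb e) * v (cb e) / dB e * meB e) * 2
        := by
  simp only [Finset.mul_sum, Finset.sum_mul]
  rw [← Finset.sum_add_distrib, ← Finset.sum_add_distrib]
  refine Finset.sum_congr rfl fun e _ => ?_
  have hd := hdB e
  field_simp
  ring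


lemma Sfv_add (u w : 𝒯 → ℝ) (K : 𝒯) :
    Sfv c1 c2 cb meI dI meB dB (u + w) K
      = Sfv c1 c2 cb meI dI meB dB u K + Sfv c1 c2 cb meI dI meB dB w K := by
  unfold Sfv
  simp only [Pi.add_apply]
  rw [add_add_add_comm]
  congr 1
  · rw [← Finset.sum_add_distrib]
    refine Finset.sum_congr rfl fun e _ => ?_
    split_ifs <;> ring
  · rw [← Finset.sum_add_distrib]
    refine Finset.sum_congr rfl fun e _ => ?_
    split_ifs <;> ring

lemma Sfv_smul (a : ℝ) (u : 𝒯 → ℝ) (K : 𝒯) :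
    Sfv c1 c2 cb meI dI meB dB (a • u) K = a * Sfv c1 c2 cb meI dI meB dB u K := by
  unfold Sfv
  simp only [Pi.smul_apply, smul_eq_mul]
  rw [mul_add]
  congr 1
  · rw [Finset.mul_sum]
    refine Finset.sum_congr rfl fun e _ => ?_
    split_ifs <;> ring
  · rw [Finset.mul_sum]
    refine Finset.sum_congr rfl fun e _ => ?_
    split_ifs <;> ring

noncomputable def Tfv : (𝒯 → ℝ) →ₗ[ℝ] (𝒯 → ℝ) where
  toFun u := fun K => -(Sfv c1 c2 cb meI dI meB dB u K)
  map_add' u w := by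
    funext K
    simp only [Pi.add_apply, Sfv_add]
    ring
  map_smul' a u := by
    funext K
    simp only [Pi.smul_apply, smul_eq_mul, RingHom.id_apply, Sfv_smul]
    ring

lemma Tfv_inj (hmeI : ∀ e, 0 < meI e) (hdI : ∀ e, 0 < dI e)
    (hmeB : ∀ e, 0 < meB e) (hdB : ∀ e, 0 < dB e)
    (hconn : ∀ K : 𝒯, ∃ K' : 𝒯,
      Relation.ReflTransGen (adjFV c1 c2) K K' ∧ ∃ e : ℰb, cb e = K') :
    Function.Injective (Tfv c1 c2 cb meI dI meB dB) := by
  rw [injective_iff_map_eq_zero]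
  intro u hu
  have hS : ∀ K, -(Sfv c1 c2 cb meI dI meB dB u K) = 0 := fun K => congrFun hu K
  have hA0 : Afv c1 c2 cb meI dI meB dB u u = 0 := by
    rw [Afv_eq_sum]
    exact Finset.sum_eq_zero fun K _ => by rw [hS K, zero_mul]
  have hInn : ∀ e : ℰi, 0 ≤ (u (c2 e) - u (c1 e)) * (u (c2 e) - u (c1 e)) / dI e * meI e :=
    fun e => mul_nonneg (div_nonneg (mul_self_nonneg _) (hdI e).le) (hmeI e).le
  have hBnn : ∀ e : ℰb, 0 ≤ u (cb e) * u (cb e) / dB e * meB e :=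
    fun e => mul_nonneg (div_nonneg (mul_self_nonneg _) (hdB e).le) (hmeB e).le
  unfold Afv at hA0
  have hIs : 0 ≤ ∑ e : ℰi, (u (c2 e) - u (c1 e)) * (u (c2 e) - u (c1 e)) / dI e * meI e :=
    Finset.sum_nonneg fun e _ => hInn e
  have hBs : 0 ≤ ∑ e : ℰb, u (cb e) * u (cb e) / dB e * meB e :=
    Finset.sum_nonneg fun e _ => hBnn e
  have hI0 : ∑ e : ℰi, (u (c2 e) - u (c1 e)) * (u (c2 e) - u (c1 e)) / dI e * meI e = 0 := by
    linarith
  have hB0 : ∑ e : ℰb, u (cb e) * u (cb e) / dB e * meB e = 0 := by linarith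
  have hflat : ∀ e : ℰi, u (c1 e) = u (c2 e) := by
    intro e
    have h := (Finset.sum_eq_zero_iff_of_nonneg fun e _ => hInn e).mp hI0 e (mem_univ e)
    have hd := (hdI e).ne'
    have hm := (hmeI e).ne'
    field_simp at h
    rw [mul_zero, sq] at h
    rcases mul_eq_zero.mp h with h' | h'
    · have := mul_self_eq_zero.mp h'
      linarith
    · exact absurd h' hm
  have hbz : ∀ e : ℰb, u (cb e) = 0 := by
    intro e
    have h := (Finset.sum_eq_zero_iff_of_nonneg fun e _ => hBnn e).mp hB0 e (mem_univ e)
    have hd := (hdB e).ne'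
    have hm := (hmeB e).ne'
    field_simp at h
    rw [mul_zero, sq] at h
    rcases mul_eq_zero.mp h with h' | h'
    · exact mul_self_eq_zero.mp h'
    · exact absurd h' hm
  have hconst : ∀ K K' : 𝒯, Relation.ReflTransGen (adjFV c1 c2) K K' → u K = u K' := by
    intro K K' h
    induction h with
    | refl => rfl
    | tail _ hadj ih =>
        obtain ⟨e, he⟩ := hadj
        rcases he with ⟨h1, h2⟩ | ⟨h1, h2⟩
        · rw [ih, ← h1, hflat e, h2]
        · rw [ih, ← h2, ← hflat e, h1]
  funext K
  obtain ⟨K', hchain, e, hcb⟩ := hconn K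
  have : u K = u K' := hconst K K' hchain
  rw [Pi.zero_apply, this, ← hcb, hbz e]

end Aux

theorem finite_volume_coherence
    {𝒯 ℰi ℰb : Type*} [Fintype 𝒯] [Fintype ℰi] [Fintype ℰb] [DecidableEq 𝒯]
    (mK : 𝒯 → ℝ) (hmK : ∀ K, 0 < mK K)
    (c1 c2 : ℰi → 𝒯) (hne : ∀ e, c1 e ≠ c2 e) (cb : ℰb → 𝒯)
    (meI : ℰi → ℝ) (hmeI : ∀ e, 0 < meI e) (dI : ℰi → ℝ) (hdI : ∀ e, 0 < dI e)
    (meB : ℰb → ℝ) (hmeB : ∀ e, 0 < meB e) (dB : ℰb → ℝ) (hdB : ∀ e, 0 < dB e)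
    (f : 𝒯 → ℝ)
    -- the discrete Lagrangian functional
    (Lh : (𝒯 → ℝ) → ℝ)
    (hLh : ∀ u, Lh u = (1 / 2) *
        ((∑ e : ℰi, ((u (c2 e) - u (c1 e)) / dI e) ^ 2 * meI e * dI e)
          + ∑ e : ℰb, (-(u (cb e)) / dB e) ^ 2 * meB e * dB e)
      - ∑ K : 𝒯, f K * u K * mK K)
    -- every cell is connected to a boundary face through faces of the mesh
    (hconn : ∀ K : 𝒯, ∃ K' : 𝒯,
      Relation.ReflTransGen (adjFV c1 c2) K K' ∧ ∃ e : ℰb, cb e = K') :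
    (∀ u : 𝒯 → ℝ,
        (∀ v : 𝒯 → ℝ, deriv (fun t : ℝ => Lh (u + t • v)) 0 = 0)
          ↔ (∀ K : 𝒯, -(lapFV mK c1 c2 cb meI dI meB dB u K) = f K)) ∧
    (∃! u : 𝒯 → ℝ, ∀ K : 𝒯, -(lapFV mK c1 c2 cb meI dI meB dB u K) = f K) := by
  have hdI' : ∀ e, dI e ≠ 0 := fun e => (hdI e).ne'
  have hdB' : ∀ e, dB e ≠ 0 := fun e => (hdB e).ne'
  -- derivative of the Lagrangian along direction v
  have hder : ∀ u v : 𝒯 → ℝ, deriv (fun t : ℝ => Lh (u + t • v)) 0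
      = Afv c1 c2 cb meI dI meB dB u v - ∑ K : 𝒯, f K * v K * mK K := by
    intro u v
    set β := Afv c1 c2 cb meI dI meB dB u v - ∑ K : 𝒯, f K * v K * mK K with hβ
    set γ := (1 / 2) * Afv c1 c2 cb meI dI meB dB v v with hγ
    have hlin : ∀ t : ℝ, (∑ K : 𝒯, f K * (u K + t * v K) * mK K)
        = (∑ K : 𝒯, f K * u K * mK K) + t * ∑ K : 𝒯, f K * v K * mK K := by
      intro t
      rw [Finset.mul_sum, ← Finset.sum_add_distrib]
      exact Finset.sum_congr rfl fun K _ => by ring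
    have key : (fun t : ℝ => Lh (u + t • v)) = fun t : ℝ => Lh u + (t * β + t ^ 2 * γ) := by
      funext t
      rw [hLh (u + t • v), hLh u]
      simp only [Pi.add_apply, Pi.smul_apply, smul_eq_mul]
      rw [sumI_expand c1 c2 meI dI hdI' u v t, sumB_expand cb meB dB hdB' u v t, hlin t,
        hβ, hγ]
      unfold Afv
      ring
    rw [key]
    have ha : HasDerivAt (fun t : ℝ => t * β) β 0 := by
      simpa using (hasDerivAt_id (0 : ℝ)).mul_const β
    have hb : HasDerivAt (fun t : ℝ => t ^ 2 * γ) 0 0 := by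
      simpa using (hasDerivAt_pow 2 (0 : ℝ)).mul_const γ
    have hD := ((ha.add hb).const_add (Lh u)).deriv
    simpa using hD
  have hiff2 : ∀ (u : 𝒯 → ℝ) (K : 𝒯),
      (-(lapFV mK c1 c2 cb meI dI meB dB u K) = f K)
        ↔ -(Sfv c1 c2 cb meI dI meB dB u K) = f K * mK K := by
    intro u K
    have hm := (hmK K).ne'
    have hlapS : lapFV mK c1 c2 cb meI dI meB dB u K
        = (1 / mK K) * Sfv c1 c2 cb meI dI meB dB u K := rfl
    rw [hlapS, one_div_mul_eq_div, ← neg_div, div_eq_iff hm]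
  have hmain : ∀ u : 𝒯 → ℝ,
      (∀ v : 𝒯 → ℝ, deriv (fun t : ℝ => Lh (u + t • v)) 0 = 0)
        ↔ (∀ K : 𝒯, -(lapFV mK c1 c2 cb meI dI meB dB u K) = f K) := by
    intro u
    constructor
    · intro hcrit K
      have h := hder u (fun K' => if K' = K then 1 else 0)
      rw [hcrit] at h
      rw [Afv_eq_sum] at h
      simp only [mul_ite, mul_one, mul_zero, ite_mul, zero_mul, Finset.sum_ite_eq',
        Finset.mem_univ, if_true] at h
      rw [hiff2]
      linarith
    · intro hsol v
      rw [hder u v, Afv_eq_sum, ← Finset.sum_sub_distrib]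
      refine Finset.sum_eq_zero fun K _ => ?_
      rw [(hiff2 u K).mp (hsol K)]
      ring
  refine ⟨hmain, ?_⟩
  have hinj := Tfv_inj c1 c2 cb meI dI meB dB hmeI hdI hmeB hdB hconn
  obtain ⟨u, hu⟩ := (LinearMap.injective_iff_surjective.mp hinj) (fun K => f K * mK K)
  have huS : ∀ K, -(Sfv c1 c2 cb meI dI meB dB u K) = f K * mK K := fun K => congrFun hu K
  refine ⟨u, fun K => (hiff2 u K).mpr (huS K), fun w hw => ?_⟩
  apply hinj
  funext K
  show -(Sfv c1 c2 cb meI dI meB dB w K) = -(Sfv c1 c2 cb meI dI meB dB u K)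
  rw [(hiff2 w K).mp (hw K), huS K]
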